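/- For every integer n ≥ 1, tan(t)^n = (1/(n−1)!) · Σ_{r=0}^{n−1} T*(n, r+1) · D_t^r tan(t) + c_n, where c_n = 0 if n is odd and c_n = (−1)^{n/2} if n is even, and T*(n,k) are the higher-order arctangent numbers. -/

import Mathlib

open Real Finset Polynomial ContDiff

/-- Tangent numbers: tan t = Σ Tₙ tⁿ/n!. -/
noncomputable def tangentNumber (n : ℕ) : ℝ := iteratedDeriv n Real.tan 0

/-- Secant numbers: sec t = Σ Sₙ tⁿ/n!. -/
noncomputable def secantNumber (n : ℕ) : ℝ := iteratedDeriv n (fun t : ℝ => 1 / Real.cos t) 0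

/-- Higher-order tangent numbers: tanᵏ t / k! = Σ T(n,k) tⁿ/n!. -/
noncomputable def T (n k : ℕ) : ℝ :=
  iteratedDeriv n (fun t : ℝ => Real.tan t ^ k) 0 / (Nat.factorial k : ℝ)

/-- Higher-order secant numbers: sec t · tanᵏ t / k! = Σ S(n,k) tⁿ/n!. -/
noncomputable def S (n k : ℕ) : ℝ :=
  iteratedDeriv n (fun t : ℝ => Real.tan t ^ k / Real.cos t) 0 / (Nat.factorial k : ℝ)

/-- Higher-order arctangent numbers: arctanᵏ t / k! = Σ T*(n,k) tⁿ/n!. -/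
noncomputable def Tstar (n k : ℕ) : ℝ :=
  iteratedDeriv n (fun t : ℝ => Real.arctan t ^ k) 0 / (Nat.factorial k : ℝ)

/-- Binomial coefficient with integer lower index (0 if lower index is negative). -/
noncomputable def chooseZ (a : ℕ) (b : ℤ) : ℝ :=
  if 0 ≤ b then (a.choose b.toNat : ℝ) else 0

/-! ### Auxiliary analytic lemmas -/

lemma smooth_diffAt {f : ℝ → ℝ} (hf : ContDiff ℝ ∞ f) (m : ℕ) (t : ℝ) :
    DifferentiableAt ℝ (iteratedDeriv m f) t :=
  (hf.differentiable_iteratedDeriv m (by exact_mod_cast lt_top_iff_ne_top.2 (by simp))) t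

lemma hasDerivAt_iteratedDeriv {f : ℝ → ℝ} (hf : ContDiff ℝ ∞ f) (m : ℕ) (t : ℝ) :
    HasDerivAt (iteratedDeriv m f) (iteratedDeriv (m+1) f t) t := by
  rw [iteratedDeriv_succ]
  exact (smooth_diffAt hf m t).hasDerivAt

lemma iteratedDeriv_id_mul {f : ℝ → ℝ} (hf : ContDiff ℝ ∞ f) (n : ℕ) :
    iteratedDeriv (n+1) (fun x => x * f x) =
      fun t => t * iteratedDeriv (n+1) f t + ((n:ℝ)+1) * iteratedDeriv n f t := by
  induction n with
  | zero =>
    funext t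
    have h : HasDerivAt (fun x => x * f x) (1 * f t + t * iteratedDeriv 1 f t) t :=
      (hasDerivAt_id t).mul (by simpa using hasDerivAt_iteratedDeriv hf 0 t)
    rw [iteratedDeriv_one, h.deriv, iteratedDeriv_zero]
    ring
  | succ n ih =>
    funext t
    rw [iteratedDeriv_succ, ih]
    have h1 : HasDerivAt (fun s => s * iteratedDeriv (n+1) f s + ((n:ℝ)+1) * iteratedDeriv n f s)
        ((1 * iteratedDeriv (n+1) f t + t * iteratedDeriv (n+2) f t) +
          ((n:ℝ)+1) * iteratedDeriv (n+1) f t) t :=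
      (((hasDerivAt_id t).mul (hasDerivAt_iteratedDeriv hf (n+1) t))).add
        ((hasDerivAt_iteratedDeriv hf n t).const_mul ((n:ℝ)+1))
    rw [h1.deriv]
    push_cast
    ring

lemma iteratedDeriv_sq_mul {f : ℝ → ℝ} (hf : ContDiff ℝ ∞ f) (n : ℕ) :
    iteratedDeriv n (fun x => x^2 * f x) 0 =
      ((n*(n-1) : ℕ) : ℝ) * iteratedDeriv (n-2) f 0 := by
  have hg : ContDiff ℝ ∞ (fun x : ℝ => x * f x) := contDiff_id.mul hf
  have hrw : (fun x : ℝ => x^2 * f x) = fun x => x * (x * f x) := by funext x; ring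
  match n with
  | 0 => simp
  | 1 =>
    rw [hrw, iteratedDeriv_id_mul hg 0]
    simp
  | (l+2) =>
    rw [hrw, iteratedDeriv_id_mul hg (l+1)]
    simp only [zero_mul, zero_add]
    rw [iteratedDeriv_id_mul hf l]
    push_cast
    ring

lemma itd_add {f g : ℝ → ℝ} (hf : ContDiff ℝ ∞ f) (hg : ContDiff ℝ ∞ g) (n : ℕ) :
    iteratedDeriv n (fun x => f x + g x) =
      fun t => iteratedDeriv n f t + iteratedDeriv n g t := by
  induction n with
  | zero => simp
  | succ n ih =>
    funext t
    rw [iteratedDeriv_succ, ih, iteratedDeriv_succ, iteratedDeriv_succ]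
    exact deriv_add (smooth_diffAt hf n t) (smooth_diffAt hg n t)

lemma itd_cmul {f : ℝ → ℝ} (hf : ContDiff ℝ ∞ f) (c : ℝ) (n : ℕ) :
    iteratedDeriv n (fun x => c * f x) = fun t => c * iteratedDeriv n f t := by
  induction n with
  | zero => simp
  | succ n ih =>
    funext t
    rw [iteratedDeriv_succ, ih, iteratedDeriv_succ]
    exact deriv_const_mul c (smooth_diffAt hf n t)

lemma itd_const_succ (c : ℝ) (m : ℕ) (t : ℝ) :
    iteratedDeriv (m+1) (fun _ : ℝ => c) t = 0 := by
  induction m generalizing c t with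
  | zero => simp
  | succ m ih =>
    rw [iteratedDeriv_succ']
    have : deriv (fun _ : ℝ => c) = fun _ : ℝ => (0:ℝ) := by funext y; simp
    rw [this]
    exact ih 0 t

/-! ### Raw higher-order arctangent numbers -/

noncomputable def ts (n k : ℕ) : ℝ := iteratedDeriv n (fun x : ℝ => Real.arctan x ^ k) 0

lemma smooth_atank (k : ℕ) : ContDiff ℝ ∞ (fun x : ℝ => Real.arctan x ^ k) :=
  Real.contDiff_arctan.pow k

lemma deriv_atank (k : ℕ) (x : ℝ) :
    deriv (fun x : ℝ => Real.arctan x ^ k) x =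
      (k : ℝ) * Real.arctan x ^ (k-1) * (1 + x^2)⁻¹ :=
  ((Real.hasDerivAt_arctan' x).pow k).deriv

lemma ts_rec (n k : ℕ) :
    (k : ℝ) * ts n (k-1) = ts (n+1) k + ((n*(n-1) : ℕ) : ℝ) * ts (n-1) k := by
  set f : ℝ → ℝ := fun x => Real.arctan x ^ k with hfdef
  have hf : ContDiff ℝ ∞ f := smooth_atank k
  have hdf : ContDiff ℝ ∞ (deriv f) := (contDiff_infty_iff_deriv.1 hf).2
  have E : (fun x : ℝ => (k:ℝ) * Real.arctan x ^ (k-1)) =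
      fun x => deriv f x + x^2 * deriv f x := by
    funext x
    have h1 : (1 : ℝ) + x^2 ≠ 0 := by positivity
    rw [hfdef, deriv_atank k x]
    field_simp
  have step1 : iteratedDeriv n (fun x : ℝ => (k:ℝ) * Real.arctan x ^ (k-1)) 0 =
      (k:ℝ) * ts n (k-1) := by
    simp only [itd_cmul (smooth_atank (k-1)) (k:ℝ) n, ts]
  have step2 : iteratedDeriv n (fun x : ℝ => deriv f x + x^2 * deriv f x) 0 =
      iteratedDeriv n (deriv f) 0 + ((n*(n-1) : ℕ) : ℝ) * iteratedDeriv (n-2) (deriv f) 0 := by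
    have hg : ContDiff ℝ ∞ (fun x : ℝ => x^2 * deriv f x) := (contDiff_id.pow 2).mul hdf
    simp only [itd_add hdf hg n, iteratedDeriv_sq_mul hdf n]
  have step3 : iteratedDeriv n (deriv f) 0 = ts (n+1) k := by
    rw [ts, iteratedDeriv_succ']
  have step4 : ((n*(n-1) : ℕ) : ℝ) * iteratedDeriv (n-2) (deriv f) 0 =
      ((n*(n-1) : ℕ) : ℝ) * ts (n-1) k := by
    match n with
    | 0 => norm_num
    | 1 => norm_num
    | (m+2) =>
      congr 1
      show iteratedDeriv m (deriv f) 0 = ts (m+1) k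
      rw [ts, iteratedDeriv_succ']
  rw [← step1, E, step2, step3, step4]

lemma ts_succ (n k : ℕ) :
    ts (n+1) k = (k : ℝ) * ts n (k-1) - ((n*(n-1) : ℕ) : ℝ) * ts (n-1) k := by
  have := ts_rec n k
  linarith

lemma ts_zero_right (m : ℕ) : ts (m+1) 0 = 0 := by
  have : (fun x : ℝ => Real.arctan x ^ 0) = fun _ : ℝ => (1:ℝ) := by funext x; simp
  rw [ts, this, itd_const_succ]

lemma ts_vanish : ∀ n, ∀ k, n < k → ts n k = 0 := by
  intro n
  induction n using Nat.strong_induction_on with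
  | _ n ih =>
    intro k hk
    match n with
    | 0 =>
      have hk0 : k ≠ 0 := by omega
      simp [ts, Real.arctan_zero, zero_pow hk0]
    | (m+1) =>
      rw [ts_succ]
      rw [ih m (by omega) (k-1) (by omega), ih (m-1) (by omega) k (by omega)]
      ring

lemma ts_one_one : ts 1 1 = 1 := by
  rw [ts, iteratedDeriv_one, deriv_atank]
  norm_num

lemma Tstar_eq (n k : ℕ) : Tstar n k = ts n k / (k.factorial : ℝ) := rfl

lemma Tstar_zero_right (m : ℕ) : Tstar (m+1) 0 = 0 := by
  rw [Tstar_eq, ts_zero_right]; simp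

lemma Tstar_vanish (n k : ℕ) (h : n < k) : Tstar n k = 0 := by
  rw [Tstar_eq, ts_vanish n k h]; simp

lemma Tstar_one_one : Tstar 1 1 = 1 := by
  rw [Tstar_eq, ts_one_one]; simp

lemma Tstar_two_one : Tstar 2 1 = 0 := by
  rw [Tstar_eq]
  have h := ts_succ 1 1
  simp only [Nat.cast_one, one_mul] at h
  have h0 : ts 1 0 = 0 := ts_zero_right 0
  simp [h, h0]

lemma Tstar_two_two : Tstar 2 2 = 1 := by
  rw [Tstar_eq]
  have h := ts_succ 1 2
  have h1 : ts 1 1 = 1 := ts_one_one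
  norm_num [h1] at h
  rw [h]
  norm_num [Nat.factorial]

lemma Tstar_rec (n j : ℕ) :
    Tstar (n+1) (j+1) = Tstar n j - ((n*(n-1) : ℕ) : ℝ) * Tstar (n-1) (j+1) := by
  have h := ts_rec n (j+1)
  simp only [Nat.add_sub_cancel] at h
  rw [Tstar_eq, Tstar_eq, Tstar_eq]
  have hf1 : (j.factorial : ℝ) ≠ 0 := Nat.cast_ne_zero.2 j.factorial_ne_zero
  have hfac : ((j+1).factorial : ℝ) = ((j:ℝ)+1) * (j.factorial : ℝ) := by
    rw [Nat.factorial_succ]; push_cast; ring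
  rw [hfac]
  have hj1 : ((j:ℝ)+1) ≠ 0 := by positivity
  push_cast at h ⊢
  have ha : ts (n+1) (j+1) =
      ((j:ℝ)+1) * ts n j - (n:ℝ) * (((n-1 : ℕ)):ℝ) * ts (n-1) (j+1) := by
    linear_combination -h
  rw [ha, sub_div, mul_div_mul_left _ _ hj1, mul_div_assoc]

/-! ### Polynomials expressing derivatives of tan -/

noncomputable def Pt : ℕ → Polynomial ℝ
  | 0 => Polynomial.X
  | (r+1) => Polynomial.derivative (Pt r) * (1 + Polynomial.X ^ 2)

lemma Pt_succ (r : ℕ) : Pt (r+1) = Polynomial.derivative (Pt r) * (1 + Polynomial.X ^ 2) := rfl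

lemma isOpen_cos_ne : IsOpen {x : ℝ | Real.cos x ≠ 0} :=
  isOpen_ne.preimage Real.continuous_cos

lemma iteratedDeriv_tan_eq (r : ℕ) : ∀ x : ℝ, Real.cos x ≠ 0 →
    iteratedDeriv r Real.tan x = (Pt r).eval (Real.tan x) := by
  induction r with
  | zero => intro x _; simp [Pt]
  | succ r ih =>
    intro x hx
    rw [iteratedDeriv_succ]
    have hev : iteratedDeriv r Real.tan =ᶠ[nhds x] fun y => (Pt r).eval (Real.tan y) := by
      filter_upwards [isOpen_cos_ne.mem_nhds hx] with y hy using ih y hy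
    rw [hev.deriv_eq]
    have h1 : HasDerivAt (fun y => (Pt r).eval (Real.tan y))
        (((Pt r).derivative).eval (Real.tan x) * (1 / Real.cos x ^ 2)) x :=
      ((Pt r).hasDerivAt (Real.tan x)).comp x (Real.hasDerivAt_tan hx)
    rw [h1.deriv, Pt_succ, Polynomial.eval_mul]
    simp only [Polynomial.eval_add, Polynomial.eval_one, Polynomial.eval_pow, Polynomial.eval_X]
    rw [one_div, ← Real.inv_one_add_tan_sq hx, inv_inv]

/-! ### The polynomial identity -/

noncomputable def cc (n : ℕ) : ℝ := if Odd n then 0 else (-1 : ℝ) ^ (n / 2)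

lemma cc_step (k : ℕ) : cc (k+3) = - cc (k+1) := by
  unfold cc
  by_cases h : Odd (k+1)
  · have h3 : Odd (k+3) := by rcases h with ⟨j, hj⟩; exact ⟨j+1, by omega⟩
    simp [h, h3]
  · have h3 : ¬ Odd (k+3) := by
      intro ⟨j, hj⟩; exact h ⟨j-1, by omega⟩
    have he : (k+1) % 2 = 0 := Nat.even_iff.mp (Nat.not_odd_iff_even.mp h)
    have hq : (k+3)/2 = (k+1)/2 + 1 := by omega
    simp only [h, h3, if_false]
    rw [hq, pow_succ]
    ring

noncomputable def Sm (n : ℕ) : Polynomial ℝ :=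
  ∑ r ∈ Finset.range n, Polynomial.C (Tstar n (r+1)) * Pt r

def polyA (m : ℕ) : Prop :=
  Polynomial.C ((m.factorial : ℕ) : ℝ) * Polynomial.X ^ (m+1) =
    Sm (m+1) + Polynomial.C (((m.factorial : ℕ) : ℝ) * cc (m+1))

lemma polyA_zero : polyA 0 := by
  unfold polyA Sm cc
  simp [Tstar_one_one, Pt]

lemma polyA_one : polyA 1 := by
  unfold polyA Sm cc
  rw [Finset.sum_range_succ, Finset.sum_range_one]
  norm_num [Pt_succ, Pt, Tstar_two_one, Tstar_two_two, Nat.odd_iff]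

lemma polyA_step (k : ℕ) (H1 : polyA k) (H2 : polyA (k+1)) : polyA (k+2) := by
  unfold polyA at H1 H2 ⊢
  have dS : Polynomial.derivative (Sm (k+2)) * (1 + Polynomial.X^2) =
      ∑ r ∈ Finset.range (k+2), Polynomial.C (Tstar (k+2) (r+1)) * Pt (r+1) := by
    rw [Sm, map_sum, Finset.sum_mul]
    refine Finset.sum_congr rfl fun r _ => ?_
    rw [Polynomial.derivative_C_mul, mul_assoc, ← Pt_succ]
  have E1 : Polynomial.C (((k+1).factorial : ℕ) : ℝ) *
        (Polynomial.C (((k+2) : ℕ) : ℝ) * Polynomial.X ^ (k+1)) * (1 + Polynomial.X^2) =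
      ∑ r ∈ Finset.range (k+2), Polynomial.C (Tstar (k+2) (r+1)) * Pt (r+1) := by
    rw [← dS]
    have hd := congrArg Polynomial.derivative H2
    rw [map_add, Polynomial.derivative_C, add_zero] at hd
    rw [← hd, Polynomial.derivative_C_mul, Polynomial.derivative_X_pow,
      Nat.add_sub_cancel]
  have hrec : ∀ r : ℕ, Tstar (k+3) (r+1) =
      Tstar (k+2) r - (((k+2)*(k+1) : ℕ) : ℝ) * Tstar (k+1) (r+1) := by
    intro r
    have h := Tstar_rec (k+2) r
    have e1 : k+2-1 = k+1 := by omega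
    rw [e1] at h
    exact h
  have hS3 : Sm (k+3) =
      (∑ r ∈ Finset.range (k+2), Polynomial.C (Tstar (k+2) (r+1)) * Pt (r+1))
        - Polynomial.C (((k+2)*(k+1) : ℕ) : ℝ) * Sm (k+1) := by
    rw [Sm]
    have h1 : ∀ r ∈ Finset.range (k+3), Polynomial.C (Tstar (k+3) (r+1)) * Pt r
        = Polynomial.C (Tstar (k+2) r) * Pt r
          - Polynomial.C (((k+2)*(k+1) : ℕ) : ℝ) * (Polynomial.C (Tstar (k+1) (r+1)) * Pt r) := by
      intro r _
      rw [hrec r, map_sub, map_mul]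
      ring
    rw [Finset.sum_congr rfl h1, Finset.sum_sub_distrib, ← Finset.mul_sum]
    congr 1
    · rw [Finset.sum_range_succ' (fun r => Polynomial.C (Tstar (k+2) r) * Pt r) (k+2)]
      rw [Tstar_zero_right (k+1)]
      simp
    · congr 1
      rw [show k+3 = (k+1)+1+1 from rfl, Finset.sum_range_succ, Finset.sum_range_succ]
      rw [Tstar_vanish (k+1) (k+1+1) (by omega), Tstar_vanish (k+1) (k+1+1+1) (by omega)]
      simp [Sm]
  rw [hS3, ← E1]
  have hfac1 : (k+2).factorial = (k+2) * (k+1).factorial := Nat.factorial_succ (k+1)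
  have hfac0 : (k+1).factorial = (k+1) * k.factorial := Nat.factorial_succ k
  have hC1 : Polynomial.C (((k+1).factorial : ℕ) : ℝ) * Polynomial.C (((k+2) : ℕ) : ℝ) =
      Polynomial.C (((k+2).factorial : ℕ) : ℝ) := by
    rw [← map_mul]
    congr 1
    rw [hfac1]
    push_cast
    ring
  have hC2 : Polynomial.C ((((k+2)*(k+1) : ℕ)) : ℝ) * Polynomial.C ((k.factorial : ℕ) : ℝ) =
      Polynomial.C (((k+2).factorial : ℕ) : ℝ) := by
    rw [← map_mul]
    congr 1
    rw [hfac1, hfac0]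
    push_cast
    ring
  have hC3 : Polynomial.C ((((k+2).factorial : ℕ) : ℝ) * cc (k+3)) +
      Polynomial.C ((((k+2)*(k+1) : ℕ)) : ℝ) *
        Polynomial.C (((k.factorial : ℕ) : ℝ) * cc (k+1)) = 0 := by
    rw [← map_mul, ← map_add]
    rw [show (0 : Polynomial ℝ) = Polynomial.C 0 from (map_zero _).symm]
    congr 1
    rw [cc_step, hfac1, hfac0]
    push_cast
    ring
  linear_combination (-(Polynomial.C ((((k+2)*(k+1) : ℕ)) : ℝ))) * H1 +
    (-(Polynomial.X^(k+1) + Polynomial.X^(k+3))) * hC1 + Polynomial.X^(k+1) * hC2 - hC3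

lemma polyA_all (m : ℕ) : polyA m := by
  have key : ∀ m, polyA m ∧ polyA (m+1) := by
    intro m
    induction m with
    | zero => exact ⟨polyA_zero, polyA_one⟩
    | succ m ih => exact ⟨ih.2, polyA_step m ih.1 ih.2⟩
  exact (key m).1

theorem stmt12 (n : ℕ) (hn : 1 ≤ n) (t : ℝ) (ht : |t| < Real.pi / 2) :
    Real.tan t ^ n =
      (1 / ((n - 1).factorial : ℝ)) *
        ∑ r ∈ Finset.range n, Tstar n (r + 1) * iteratedDeriv r Real.tan t +
      (if Odd n then 0 else (-1 : ℝ) ^ (n / 2)) := by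
  obtain ⟨m, rfl⟩ : ∃ m, n = m + 1 := ⟨n - 1, by omega⟩
  have h1 := abs_lt.mp ht
  have hcos : Real.cos t ≠ 0 := (Real.cos_pos_of_mem_Ioo ⟨h1.1, h1.2⟩).ne'
  have hP := polyA_all m
  unfold polyA Sm at hP
  have hev := congrArg (Polynomial.eval (Real.tan t)) hP
  simp only [Polynomial.eval_mul, Polynomial.eval_add, Polynomial.eval_C, Polynomial.eval_pow,
    Polynomial.eval_X, Polynomial.eval_finset_sum] at hev
  have hsum : ∑ r ∈ Finset.range (m+1), Tstar (m+1) (r+1) * (Pt r).eval (Real.tan t)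
      = ∑ r ∈ Finset.range (m+1), Tstar (m+1) (r+1) * iteratedDeriv r Real.tan t :=
    Finset.sum_congr rfl fun r _ => by rw [iteratedDeriv_tan_eq r t hcos]
  rw [hsum] at hev
  have hne : (m.factorial : ℝ) ≠ 0 := Nat.cast_ne_zero.2 m.factorial_ne_zero
  have hfac : (m + 1 - 1) = m := by omega
  rw [hfac]
  have hcc : (if Odd (m+1) then (0:ℝ) else (-1 : ℝ) ^ ((m+1) / 2)) = cc (m+1) := rfl
  rw [hcc]
  refine mul_left_cancel₀ hne ?_
  rw [mul_add, ← mul_assoc, mul_one_div, div_self hne, one_mul]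
  exact hev
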